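/- Under the shared-Bernoulli coupling of Greedy and OPT with geometric usage durations F_i = Geometric(p_i) and p = min_i p_i, for every resource i ∈ {1,...,N} and time t ∈ {1,...,T}: Pr(A*_t = A_t = i) ≥ (p/(1-p)) · Pr(A*_t = i and O_{it}). -/

import Mathlib

open Finset

/-- An online policy for the online matching problem with reusable resources,
with `N` resources, `T` requests, and neighborhoods `Nbr`.  Upon arrival of
request `t`, the policy observes the time `t`, the set of currently available
resources, and the history of previously observed availability sets, and
matches the request to at most one available resource adjacent to `t`
(`none` means no match). -/
structure Policy (N T : ℕ) (Nbr : Fin T → Finset (Fin N)) where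
  act : Fin T → Finset (Fin N) → List (Finset (Fin N)) → Option (Fin N)
  feasible : ∀ t I hist i, act t I hist = some i → i ∈ I ∩ Nbr t

/-- Sample space of the shared-Bernoulli coupling for geometric usage
durations: `ω i t` is the return flag `P_{it} ~ Bernoulli (p i)`.  A resource
`i` that is unavailable returns at the start of time `t` iff `ω i t = true`;
this makes the usage duration of every match of `i` distributed as
`Geometric (p i)` on `{1, 2, ...}`. -/
abbrev Flags (N T : ℕ) := Fin N → Fin T → Bool

/-- One step of the dynamics at time `t`.  The state is the pair consisting of
the set of resources unavailable at the end of the previous step and the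
history of observed availability sets. -/
def step {N T : ℕ} {Nbr : Fin T → Finset (Fin N)} (π : Policy N T Nbr)
    (ω : Flags N T) (s : Finset (Fin N) × List (Finset (Fin N))) (t : Fin T) :
    Finset (Fin N) × List (Finset (Fin N)) :=
  let busy := s.1.filter fun i => ω i t = false
  let I : Finset (Fin N) := Finset.univ \ busy
  match π.act t I s.2 with
  | none => (busy, I :: s.2)
  | some i => (insert i busy, I :: s.2)

/-- The state just before step `n` (resources unavailable at the end of step
`n-1`, together with the observed history). -/
def stateUpTo {N T : ℕ} {Nbr : Fin T → Finset (Fin N)} (π : Policy N T Nbr)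
    (ω : Flags N T) (n : ℕ) : Finset (Fin N) × List (Finset (Fin N)) :=
  ((List.finRange T).take n).foldl (step π ω) (∅, [])

/-- `I_t`: the set of resources available at time `t` under policy `π`. -/
def avail {N T : ℕ} {Nbr : Fin T → Finset (Fin N)} (π : Policy N T Nbr)
    (ω : Flags N T) (t : Fin T) : Finset (Fin N) :=
  Finset.univ \ ((stateUpTo π ω t.val).1.filter fun i => ω i t = false)

/-- `A_t`: the resource matched at time `t` under policy `π` (`none` = no match). -/
def act {N T : ℕ} {Nbr : Fin T → Finset (Fin N)} (π : Policy N T Nbr)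
    (ω : Flags N T) (t : Fin T) : Option (Fin N) :=
  π.act t (avail π ω t) (stateUpTo π ω t.val).2

/-- The total reward collected by policy `π` on the sample path `ω`. -/
def reward {N T : ℕ} {Nbr : Fin T → Finset (Fin N)} (r : Fin N → ℝ)
    (π : Policy N T Nbr) (ω : Flags N T) : ℝ :=
  ∑ t : Fin T, (act π ω t).elim 0 r

/-- Probability of the flag configuration `ω` when `P_{it} ~ Bernoulli (p i)`
independently. -/
noncomputable def weight {N T : ℕ} (p : Fin N → ℝ) (ω : Flags N T) : ℝ :=
  ∏ i : Fin N, ∏ t : Fin T, if ω i t then p i else 1 - p i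

/-- Expectation over the i.i.d. Bernoulli return flags. -/
noncomputable def expect {N T : ℕ} (p : Fin N → ℝ) (f : Flags N T → ℝ) : ℝ :=
  ∑ ω : Flags N T, weight p ω * f ω

/-- The greedy policy: match the available neighboring resource of largest
index (equivalently, of highest reward, since rewards are sorted). -/
def greedy (N T : ℕ) (Nbr : Fin T → Finset (Fin N)) : Policy N T Nbr where
  act := fun t I _ => if h : (I ∩ Nbr t).Nonempty then some ((I ∩ Nbr t).max' h) else none
  feasible := by
    intro t I hist i hi
    by_cases h : (I ∩ Nbr t).Nonempty
    · rw [dif_pos h, Option.some.injEq] at hi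
      exact hi ▸ Finset.max'_mem _ h
    · rw [dif_neg h] at hi
      exact absurd hi (by simp)

/-- `Greedy(I)`: the expected total reward of the greedy policy. -/
noncomputable def greedyVal (N T : ℕ) (Nbr : Fin T → Finset (Fin N))
    (r : Fin N → ℝ) (p : Fin N → ℝ) : ℝ :=
  expect p (reward r (greedy N T Nbr))

/-- `OPT(I)`: the optimal expected total reward over all (clairvoyant)
policies; such a policy knows the whole instance, including the request
sequence, but observes returns only as they occur. -/
noncomputable def optVal (N T : ℕ) (Nbr : Fin T → Finset (Fin N))
    (r : Fin N → ℝ) (p : Fin N → ℝ) : ℝ :=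
  ⨆ π : Policy N T Nbr, expect p (reward r π)

section AuxLemmas

variable {N T : ℕ} {Nbr : Fin T → Finset (Fin N)}

lemma foldl_congr_aux {α β : Type*} {f g : α → β → α} :
    ∀ (l : List β), (∀ b ∈ l, ∀ x, f x b = g x b) → ∀ a, l.foldl f a = l.foldl g a
  | [], _, _ => rfl
  | b :: l, h, a => by
      simp only [List.foldl_cons]
      rw [h b List.mem_cons_self a]
      exact foldl_congr_aux l (fun b' hb x => h b' (List.mem_cons_of_mem _ hb) x) _

lemma mem_take_finRange {n : ℕ} {b : Fin T} (h : b ∈ (List.finRange T).take n) :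
    (b : ℕ) < n := by
  rw [List.mem_take_iff_getElem] at h
  obtain ⟨k, hk, hb⟩ := h
  rw [List.getElem_finRange] at hb
  have hbk : (b : ℕ) = k := by rw [← hb]; rfl
  omega

lemma step_congr (π : Policy N T Nbr) (ω ω' : Flags N T) (s : Fin T)
    (h : ∀ j, ω j s = ω' j s) (x : Finset (Fin N) × List (Finset (Fin N))) :
    step π ω x s = step π ω' x s := by
  have hf : (x.1.filter fun j => ω j s = false) = x.1.filter fun j => ω' j s = false :=
    Finset.filter_congr fun j _ => by rw [h j]
  simp only [step, hf]

lemma stateUpTo_congr (π : Policy N T Nbr) (ω ω' : Flags N T) (n : ℕ)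
    (h : ∀ (j : Fin N) (s : Fin T), (s : ℕ) < n → ω j s = ω' j s) :
    stateUpTo π ω n = stateUpTo π ω' n := by
  unfold stateUpTo
  exact foldl_congr_aux _ (fun s hs x => step_congr π ω ω' s
    (fun j => h j s (mem_take_finRange hs)) x) _

/-- Flip the flag of resource `i` at time `t` to `true`. -/
def flipFlag (ω : Flags N T) (i : Fin N) (t : Fin T) : Flags N T :=
  Function.update ω i (Function.update (ω i) t true)

lemma flipFlag_self (ω : Flags N T) (i : Fin N) (t : Fin T) :
    flipFlag ω i t i t = true := by
  simp [flipFlag]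

lemma flipFlag_ne (ω : Flags N T) (i : Fin N) (t : Fin T) (j : Fin N) (s : Fin T)
    (h : ¬(j = i ∧ s = t)) : flipFlag ω i t j s = ω j s := by
  unfold flipFlag
  rcases eq_or_ne j i with rfl | hj
  · rw [Function.update_self, Function.update_of_ne (fun hs => h ⟨rfl, hs⟩)]
  · rw [Function.update_of_ne hj]

lemma stateUpTo_flipFlag (π : Policy N T Nbr) (ω : Flags N T) (i : Fin N) (t : Fin T) :
    stateUpTo π (flipFlag ω i t) (t : ℕ) = stateUpTo π ω (t : ℕ) :=
  stateUpTo_congr _ _ _ _ fun j s hs =>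
    flipFlag_ne ω i t j s (fun hc => by simp [hc.2] at hs)

lemma weight_nonneg {pv : Fin N → ℝ} (h0 : ∀ i, 0 ≤ pv i) (h1 : ∀ i, pv i ≤ 1)
    (ω : Flags N T) : 0 ≤ weight pv ω :=
  Finset.prod_nonneg fun j _ => Finset.prod_nonneg fun s _ => by
    by_cases h : ω j s = true
    · simpa [h] using h0 j
    · rw [if_neg h]
      linarith [h1 j]

lemma weight_flipFlag (pv : Fin N → ℝ) (ω : Flags N T) (i : Fin N) (t : Fin T)
    (h : ω i t = false) :
    (1 - pv i) * weight pv (flipFlag ω i t) = pv i * weight pv ω := by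
  have inner : ∀ (g : Fin T → Bool),
      (∏ s : Fin T, if g s then pv i else 1 - pv i)
      = (if g t then pv i else 1 - pv i) *
          ∏ s ∈ Finset.univ.erase t, if g s then pv i else 1 - pv i := by
    intro g
    exact (Finset.mul_prod_erase _ _ (Finset.mem_univ t)).symm
  have houter : ∀ (ω' : Flags N T),
      weight pv ω' = (∏ s : Fin T, if ω' i s then pv i else 1 - pv i) *
        ∏ j ∈ Finset.univ.erase i, ∏ s : Fin T, if ω' j s then pv j else 1 - pv j := by
    intro ω'
    rw [weight]
    exact (Finset.mul_prod_erase _ _ (Finset.mem_univ i)).symm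
  rw [houter (flipFlag ω i t), houter ω, inner (flipFlag ω i t i), inner (ω i)]
  have e1 : (∏ j ∈ Finset.univ.erase i, ∏ s : Fin T,
      if flipFlag ω i t j s then pv j else 1 - pv j)
      = ∏ j ∈ Finset.univ.erase i, ∏ s : Fin T, if ω j s then pv j else 1 - pv j :=
    Finset.prod_congr rfl fun j hj => Finset.prod_congr rfl fun s _ => by
      rw [flipFlag_ne ω i t j s (fun hc => Finset.ne_of_mem_erase hj hc.1)]
  have e2 : (∏ s ∈ Finset.univ.erase t, if flipFlag ω i t i s then pv i else 1 - pv i)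
      = ∏ s ∈ Finset.univ.erase t, if ω i s then pv i else 1 - pv i :=
    Finset.prod_congr rfl fun s hs => by
      rw [flipFlag_ne ω i t i s (fun hc => Finset.ne_of_mem_erase hs hc.2)]
  rw [e1, e2, flipFlag_self, h]
  norm_num
  ring

lemma flipFlag_acts (π : Policy N T Nbr) (ω : Flags N T) (i : Fin N) (t : Fin T)
    (hπ : act π ω t = some i)
    (hO : ∀ j, i ≤ j → j ∉ avail (greedy N T Nbr) ω t) :
    act π (flipFlag ω i t) t = some i ∧
      act (greedy N T Nbr) (flipFlag ω i t) t = some i := by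
  set G := greedy N T Nbr with hG
  have hGi : i ∉ avail G ω t := hO i le_rfl
  have hbf : i ∈ (stateUpTo G ω (t : ℕ)).1 ∧ ω i t = false := by
    simpa [avail] using hGi
  have hflag : ω i t = false := hbf.2
  have hfeas := π.feasible t (avail π ω t) (stateUpTo π ω (t : ℕ)).2 i hπ
  rw [Finset.mem_inter] at hfeas
  have hiNbr : i ∈ Nbr t := hfeas.2
  have hiavail : i ∈ avail π ω t := hfeas.1
  have hnotbusy : i ∉ (stateUpTo π ω (t : ℕ)).1 := by
    intro hb
    have : i ∉ avail π ω t := by simp [avail, hb, hflag]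
    exact this hiavail
  have hstπ := stateUpTo_flipFlag π ω i t
  have hstG := stateUpTo_flipFlag G ω i t
  have havπ : avail π (flipFlag ω i t) t = avail π ω t := by
    ext a
    by_cases ha : a = i
    · subst ha
      simp [avail, hstπ, hnotbusy]
    · have hne := flipFlag_ne ω i t a t (fun hc => ha hc.1)
      simp [avail, hstπ, hne]
  have havG : avail G (flipFlag ω i t) t = insert i (avail G ω t) := by
    ext a
    by_cases ha : a = i
    · subst ha
      simp [avail, hstG, flipFlag_self]
    · have hne := flipFlag_ne ω i t a t (fun hc => ha hc.1)
      simp [avail, hstG, hne, ha]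
  constructor
  · show π.act t (avail π (flipFlag ω i t) t) (stateUpTo π (flipFlag ω i t) (t : ℕ)).2 = some i
    rw [havπ, hstπ]
    exact hπ
  · have hiS : i ∈ avail G (flipFlag ω i t) t ∩ Nbr t := by
      rw [havG]
      exact Finset.mem_inter.2 ⟨Finset.mem_insert_self _ _, hiNbr⟩
    have hne : (avail G (flipFlag ω i t) t ∩ Nbr t).Nonempty := ⟨i, hiS⟩
    have hmax : (avail G (flipFlag ω i t) t ∩ Nbr t).max' hne = i := by
      refine le_antisymm (Finset.max'_le _ _ _ fun j hj => ?_) (Finset.le_max' _ i hiS)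
      rw [havG, Finset.mem_inter, Finset.mem_insert] at hj
      rcases hj.1 with rfl | hj1
      · exact le_rfl
      · by_contra hji
        exact hO j (le_of_not_ge hji) hj1
    show G.act t (avail G (flipFlag ω i t) t) (stateUpTo G (flipFlag ω i t) (t : ℕ)).2 = some i
    rw [hG]
    show (if h : (avail G (flipFlag ω i t) t ∩ Nbr t).Nonempty
        then some ((avail G (flipFlag ω i t) t ∩ Nbr t).max' h) else none) = some i
    rw [dif_pos hne, hmax]

end AuxLemmas

/-- **Key lemma.**  Under the shared-Bernoulli coupling of Greedy and any
benchmark policy `π` (in particular the optimal clairvoyant policy `OPT`) with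
geometric usage durations `F i = Geometric (pv i)` and `p = min_i pv i < 1`,
for every resource `i` and time `t`:
`Pr(A*_t = A_t = i) ≥ (p/(1-p)) · Pr(A*_t = i and O_{it})`, where `O_{it}` is
the event that every resource `j ≥ i` is unavailable under Greedy at time `t`. -/
theorem same_match_prob_ge
    (N T : ℕ) (hN : 0 < N)
    (r : Fin N → ℝ) (hr0 : ∀ i, 0 ≤ r i) (hrmono : Monotone r)
    (Nbr : Fin T → Finset (Fin N))
    (pv : Fin N → ℝ) (hpv0 : ∀ i, 0 ≤ pv i) (hpv1 : ∀ i, pv i ≤ 1)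
    (p : ℝ) (hp : p = ⨅ i, pv i) (hp1 : p < 1)
    (π : Policy N T Nbr) (i : Fin N) (t : Fin T) :
    expect pv (fun ω =>
        if act π ω t = some i ∧ act (greedy N T Nbr) ω t = some i then 1 else 0)
      ≥ (p / (1 - p)) *
        expect pv (fun ω =>
          if act π ω t = some i ∧ (∀ j, i ≤ j → j ∉ avail (greedy N T Nbr) ω t)
          then 1 else 0) :=  by
  classical
  haveI hneN : Nonempty (Fin N) := ⟨⟨0, hN⟩⟩
  have hp0 : 0 ≤ p := hp ▸ le_ciInf fun j => hpv0 j
  have hple : ∀ j, p ≤ pv j := fun j =>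
    hp ▸ ciInf_le (Set.Finite.bddBelow (Set.finite_range pv)) j
  have h1p : 0 < 1 - p := by linarith
  have flagB : ∀ ω : Flags N T,
      (∀ j, i ≤ j → j ∉ avail (greedy N T Nbr) ω t) → ω i t = false := by
    intro ω h
    have := h i le_rfl
    have h2 : i ∈ (stateUpTo (greedy N T Nbr) ω (t : ℕ)).1 ∧ ω i t = false := by
      simpa [avail] using this
    exact h2.2
  rw [ge_iff_le]
  unfold _root_.expect
  simp only [mul_ite, mul_one, mul_zero]
  rw [← Finset.sum_filter, ← Finset.sum_filter]
  set ΦB := Finset.univ.filter fun ω : Flags N T =>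
    act π ω t = some i ∧ ∀ j, i ≤ j → j ∉ avail (greedy N T Nbr) ω t with hΦB
  set ΦA := Finset.univ.filter fun ω : Flags N T =>
    act π ω t = some i ∧ act (greedy N T Nbr) ω t = some i with hΦA
  have hwnn : ∀ ω : Flags N T, 0 ≤ weight pv ω := weight_nonneg hpv0 hpv1
  calc p / (1 - p) * ∑ ω ∈ ΦB, weight pv ω
      = ∑ ω ∈ ΦB, p / (1 - p) * weight pv ω := Finset.mul_sum _ _ _
    _ ≤ ∑ ω ∈ ΦB, weight pv (flipFlag ω i t) := by
        apply Finset.sum_le_sum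
        intro ω hω
        rw [hΦB, Finset.mem_filter] at hω
        have hflag : ω i t = false := flagB ω hω.2.2
        have key := weight_flipFlag pv ω i t hflag
        rcases lt_or_eq_of_le (hpv1 i) with hpi1 | hpi1
        · have hpi1' : 0 < 1 - pv i := by linarith
          have hdiv : p / (1 - p) ≤ pv i / (1 - pv i) :=
            div_le_div₀ (hpv0 i) (hple i) hpi1' (by linarith [hple i])
          calc p / (1 - p) * weight pv ω ≤ pv i / (1 - pv i) * weight pv ω :=
                mul_le_mul_of_nonneg_right hdiv (hwnn ω)
            _ = weight pv (flipFlag ω i t) := by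
                rw [div_mul_eq_mul_div, div_eq_iff hpi1'.ne']
                linarith [key]
        · have hw0 : weight pv ω = 0 := by
            rw [hpi1] at key
            simpa using key.symm
          rw [hw0, mul_zero]
          exact hwnn _
    _ = ∑ ω' ∈ ΦB.image (fun ω => flipFlag ω i t), weight pv ω' := by
        rw [Finset.sum_image]
        intro ω hω ω' hω' hΦ
        rw [hΦB, Finset.mem_coe, Finset.mem_filter] at hω hω'
        have f1 : ω i t = false := flagB ω hω.2.2
        have f2 : ω' i t = false := flagB ω' hω'.2.2
        funext j s
        by_cases hc : j = i ∧ s = t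
        · obtain ⟨rfl, rfl⟩ := hc
          rw [f1, f2]
        · rw [← flipFlag_ne ω i t j s hc, ← flipFlag_ne ω' i t j s hc, show flipFlag ω i t = flipFlag ω' i t from hΦ]
    _ ≤ ∑ ω' ∈ ΦA, weight pv ω' := by
        apply Finset.sum_le_sum_of_subset_of_nonneg
        · intro ω' hω'
          rw [Finset.mem_image] at hω'
          obtain ⟨ω, hω, rfl⟩ := hω'
          rw [hΦB, Finset.mem_filter] at hω
          rw [hΦA, Finset.mem_filter]
          exact ⟨Finset.mem_univ _, flipFlag_acts π ω i t hω.2.1 hω.2.2⟩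
        · intro ω' _ _
          exact hwnn ω'
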